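/- arXiv:2012.06394 — 2 statements merged into one kernel-verified Lean document; each statement's English description precedes it below -/
import Mathlib

section
/- Let β̄₀ + Σ_{j=1}^n β̄_j x_j + β′ y ≥ 0 and β̂₀ + Σ_{j=1}^n β̂_j x_j + β′ y ≥ 0 be two valid core inequalities for conv(G) with the same β′. Suppose (1) β̄_p = β̄_q whenever p < q and β̂_p = β̂_q, and (2) the set {k ∈ {0,…,n} : L_k(β̂₀,β̂) + β′·m(x^k) = 0} is a strict subset of {k ∈ {0,…,n} : L_k(β̄₀,β̄) + β′·m(x^k) = 0}. Then the inequality β̂₀ + Σ_{j=1}^n β̂_j x_j + β′ y ≥ 0 is not facet-defining for conv(G). -/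
open Finset

/-- The symmetric multilinear polynomial `m(x) = ∑_{i=2}^n c_i ∑_{|J|=i} ∏_{j∈J} x_j`. -/
noncomputable def mPoly (n : ℕ) (c : ℕ → ℝ) (x : Fin n → ℝ) : ℝ :=
  ∑ i ∈ Finset.Icc 2 n, c i *
    ∑ J ∈ Finset.powersetCard i (Finset.univ : Finset (Fin n)), ∏ j ∈ J, x j

/-- The box `X = [ℓ,u]^n`. -/
def Xbox (n : ℕ) (ℓ u : ℝ) : Set (Fin n → ℝ) :=
  {x | ∀ j, x j ∈ Set.Icc ℓ u}

/-- The graph `G = {(x,y) : x ∈ X, y = m(x)}`. -/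
def Gset (n : ℕ) (ℓ u : ℝ) (c : ℕ → ℝ) : Set ((Fin n → ℝ) × ℝ) :=
  {p | p.1 ∈ Xbox n ℓ u ∧ p.2 = mPoly n c p.1}

/-- The point `x^k` whose first `k` coordinates are `u` and remaining ones are `ℓ`. -/
def xpt (n : ℕ) (ℓ u : ℝ) (k : ℕ) : Fin n → ℝ :=
  fun j => if (j : ℕ) < k then u else ℓ

/-- `m(x^k)`. -/
noncomputable def mval (n : ℕ) (ℓ u : ℝ) (c : ℕ → ℝ) (k : ℕ) : ℝ :=
  mPoly n c (xpt n ℓ u k)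

/-- `L_k(β₀,β) = β₀ + u ∑_{j=1}^k β_j + ℓ ∑_{j=k+1}^n β_j`. -/
noncomputable def Lk (n : ℕ) (ℓ u : ℝ) (β₀ : ℝ) (β : Fin n → ℝ) (k : ℕ) : ℝ :=
  β₀ + u * ∑ j ∈ Finset.univ.filter (fun j : Fin n => (j : ℕ) < k), β j
     + ℓ * ∑ j ∈ Finset.univ.filter (fun j : Fin n => k ≤ (j : ℕ)), β j

/-- The left-hand side `β₀ + ∑_j β_j x_j + β′ y` of an inequality, at the point `p = (x,y)`. -/
noncomputable def ineqLhs (n : ℕ) (β₀ : ℝ) (β : Fin n → ℝ) (β' : ℝ)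
    (p : (Fin n → ℝ) × ℝ) : ℝ :=
  β₀ + ∑ j, β j * p.1 j + β' * p.2

/-- A core inequality: `β′ ∈ {1,-1}` and nondecreasing coefficients `β₁ ≤ … ≤ βₙ`. -/
def IsCore (n : ℕ) (β : Fin n → ℝ) (β' : ℝ) : Prop :=
  (β' = 1 ∨ β' = -1) ∧ Monotone β

/-- Validity of the inequality `β₀ + ∑_j β_j x_j + β′ y ≥ 0` on `conv(G)`. -/
def IsValid (n : ℕ) (ℓ u : ℝ) (c : ℕ → ℝ) (β₀ : ℝ) (β : Fin n → ℝ) (β' : ℝ) : Prop :=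
  ∀ p ∈ convexHull ℝ (Gset n ℓ u c), 0 ≤ ineqLhs n β₀ β β' p

/-- The point `p` satisfies the inequality exactly (with equality). -/
def ExactAt (n : ℕ) (β₀ : ℝ) (β : Fin n → ℝ) (β' : ℝ) (p : (Fin n → ℝ) × ℝ) : Prop :=
  ineqLhs n β₀ β β' p = 0

/-- Facet-defining: there are `n+1` affinely independent points of `conv(G)`
satisfying the inequality exactly. -/
def IsFacet (n : ℕ) (ℓ u : ℝ) (c : ℕ → ℝ) (β₀ : ℝ) (β : Fin n → ℝ) (β' : ℝ) : Prop :=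
  ∃ pts : Fin (n + 1) → (Fin n → ℝ) × ℝ,
    AffineIndependent ℝ pts ∧
    ∀ i, pts i ∈ convexHull ℝ (Gset n ℓ u c) ∧ ExactAt n β₀ β β' (pts i)

/-- The point `(x^k, m(x^k))` of `G`. -/
noncomputable def vtx (n : ℕ) (ℓ u : ℝ) (c : ℕ → ℝ) (k : ℕ) : (Fin n → ℝ) × ℝ :=
  (xpt n ℓ u k, mval n ℓ u c k)

/-- vertex of the box indexed by the set of coords equal to `u` -/
def vert (n : ℕ) (ℓ u : ℝ) (S : Finset (Fin n)) : Fin n → ℝ := fun j => if j ∈ S then u else ℓ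

/-- multilinear interpolation weight -/
noncomputable def wt (n : ℕ) (ℓ u : ℝ) (S : Finset (Fin n)) (x : Fin n → ℝ) : ℝ :=
  ∏ j, (if j ∈ S then (x j - ℓ) else (u - x j)) / (u - ℓ)

lemma interp {n : ℕ} {ℓ u : ℝ} (hlu : ℓ < u) (x : Fin n → ℝ) (J : Finset (Fin n)) :
    ∑ S ∈ (univ : Finset (Fin n)).powerset, wt n ℓ u S x * ∏ j ∈ J, vert n ℓ u S j
      = ∏ j ∈ J, x j := by
  have hne : u - ℓ ≠ 0 := sub_ne_zero.2 (ne_of_gt hlu)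
  set f : Fin n → ℝ := fun j => (x j - ℓ) * (if j ∈ J then u else 1) / (u - ℓ) with hf
  set g : Fin n → ℝ := fun j => (u - x j) * (if j ∈ J then ℓ else 1) / (u - ℓ) with hg
  have key : ∀ S ∈ (univ : Finset (Fin n)).powerset,
      wt n ℓ u S x * ∏ j ∈ J, vert n ℓ u S j
        = (∏ j ∈ S, f j) * ∏ j ∈ univ \ S, g j := by
    intro S _
    have h1 : ∏ j ∈ J, vert n ℓ u S j = ∏ j ∈ univ, (if j ∈ J then vert n ℓ u S j else 1) := by
      rw [Finset.prod_ite_mem, Finset.univ_inter]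
    rw [h1, wt, ← Finset.prod_mul_distrib]
    have h2 : ∀ j : Fin n,
        (if j ∈ S then (x j - ℓ) else (u - x j)) / (u - ℓ) * (if j ∈ J then vert n ℓ u S j else 1)
          = if j ∈ S then f j else g j := by
      intro j
      by_cases hjS : j ∈ S <;> by_cases hjJ : j ∈ J <;>
        simp [hf, hg, vert, hjS, hjJ] <;> ring
    rw [Finset.prod_congr rfl fun j _ => h2 j]
    rw [Finset.prod_ite, Finset.filter_mem_eq_inter, Finset.univ_inter]
    congr 1
    apply Finset.prod_congr _ fun _ _ => rfl
    ext j; simp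
  rw [Finset.sum_congr rfl key, ← Finset.prod_add f g univ]
  rw [show ∏ j ∈ J, x j = ∏ j ∈ univ, (if j ∈ J then x j else 1) by
    rw [Finset.prod_ite_mem, Finset.univ_inter]]
  apply Finset.prod_congr rfl
  intro j _
  by_cases hjJ : j ∈ J <;> simp only [hf, hg, hjJ, if_true, if_false] <;> field_simp <;> ring


lemma wt_nonneg {n : ℕ} {ℓ u : ℝ} (hlu : ℓ < u) {x : Fin n → ℝ} (hx : x ∈ Xbox n ℓ u)
    (S : Finset (Fin n)) : 0 ≤ wt n ℓ u S x := by
  apply Finset.prod_nonneg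
  intro j _
  apply div_nonneg _ (le_of_lt (sub_pos.2 hlu))
  rcases hx j with ⟨h1, h2⟩
  split <;> [exact sub_nonneg.2 h1; exact sub_nonneg.2 h2]

lemma vert_mem_Xbox {n : ℕ} {ℓ u : ℝ} (hlu : ℓ < u) (S : Finset (Fin n)) :
    vert n ℓ u S ∈ Xbox n ℓ u := by
  intro j
  unfold vert
  split <;> constructor <;> simp [le_of_lt hlu]

lemma vert_mem_Gset {n : ℕ} {ℓ u : ℝ} {c : ℕ → ℝ} (hlu : ℓ < u) (S : Finset (Fin n)) :
    (vert n ℓ u S, mPoly n c (vert n ℓ u S)) ∈ Gset n ℓ u c :=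
  ⟨vert_mem_Xbox hlu S, rfl⟩

lemma interp_const {n : ℕ} {ℓ u : ℝ} (hlu : ℓ < u) (x : Fin n → ℝ) :
    ∑ S ∈ (univ : Finset (Fin n)).powerset, wt n ℓ u S x = 1 := by
  have := interp hlu x ∅
  simpa using this

lemma interp_coord {n : ℕ} {ℓ u : ℝ} (hlu : ℓ < u) (x : Fin n → ℝ) (j : Fin n) :
    ∑ S ∈ (univ : Finset (Fin n)).powerset, wt n ℓ u S x * vert n ℓ u S j = x j := by
  have := interp hlu x {j}
  simpa using this

lemma interp_m {n : ℕ} {ℓ u : ℝ} {c : ℕ → ℝ} (hlu : ℓ < u) (x : Fin n → ℝ) :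
    ∑ S ∈ (univ : Finset (Fin n)).powerset, wt n ℓ u S x * mPoly n c (vert n ℓ u S)
      = mPoly n c x := by
  unfold mPoly
  simp_rw [Finset.mul_sum]
  rw [Finset.sum_comm]
  apply Finset.sum_congr rfl
  intro i _
  simp_rw [mul_left_comm (wt n ℓ u _ x) (c i), ← Finset.mul_sum]
  congr 1
  simp_rw [Finset.mul_sum]
  rw [Finset.sum_comm]
  apply Finset.sum_congr rfl
  intro J _
  exact interp hlu x J

lemma ineqLhs_decomp {n : ℕ} {ℓ u : ℝ} {c : ℕ → ℝ} (hlu : ℓ < u)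
    (β₀ : ℝ) (β : Fin n → ℝ) (β' : ℝ) (x : Fin n → ℝ) :
    ineqLhs n β₀ β β' (x, mPoly n c x)
      = ∑ S ∈ (univ : Finset (Fin n)).powerset,
          wt n ℓ u S x * ineqLhs n β₀ β β' (vert n ℓ u S, mPoly n c (vert n ℓ u S)) := by
  unfold ineqLhs
  simp only
  simp_rw [mul_add, Finset.sum_add_distrib, Finset.mul_sum]
  have e1 : ∑ S ∈ (univ : Finset (Fin n)).powerset, wt n ℓ u S x * β₀ = β₀ := by
    rw [← Finset.sum_mul, interp_const hlu, one_mul]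
  have e2 : ∑ S ∈ (univ : Finset (Fin n)).powerset,
      ∑ j, wt n ℓ u S x * (β j * vert n ℓ u S j) = ∑ j, β j * x j := by
    rw [Finset.sum_comm]
    apply Finset.sum_congr rfl
    intro j _
    simp_rw [mul_left_comm (wt n ℓ u _ x) (β j), ← Finset.mul_sum]
    rw [interp_coord hlu]
  have e3 : ∑ S ∈ (univ : Finset (Fin n)).powerset,
      wt n ℓ u S x * (β' * mPoly n c (vert n ℓ u S)) = β' * mPoly n c x := by
    simp_rw [mul_left_comm (wt n ℓ u _ x) β', ← Finset.mul_sum]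
    rw [interp_m hlu]
  rw [e1, e2, e3]

/-- the symmetric polynomial only depends on the cardinality of the vertex's `u`-set -/
lemma mPoly_vert_congr {n : ℕ} {ℓ u : ℝ} {c : ℕ → ℝ} (S T : Finset (Fin n))
    (h : S.card = T.card) :
    mPoly n c (vert n ℓ u S) = mPoly n c (vert n ℓ u T) := by
  classical
  have hcc : Sᶜ.card = Tᶜ.card := by simp [Finset.card_compl, h]
  let e : {x : Fin n // x ∈ S} ≃ {x : Fin n // x ∈ T} := Finset.equivOfCardEq h
  let f0 : {x : Fin n // x ∈ Sᶜ} ≃ {x : Fin n // x ∈ Tᶜ} := Finset.equivOfCardEq hcc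
  let f : {x : Fin n // ¬ x ∈ S} ≃ {x : Fin n // ¬ x ∈ T} :=
    (Equiv.subtypeEquivRight (fun x => (Finset.mem_compl (s := S)).symm)).trans
      (f0.trans (Equiv.subtypeEquivRight (fun x => Finset.mem_compl)))
  let σ : Equiv.Perm (Fin n) := Equiv.subtypeCongr e f
  have hσ : ∀ j : Fin n, vert n ℓ u T (σ j) = vert n ℓ u S j := by
    intro j
    by_cases hj : j ∈ S
    · have hmem : σ j ∈ T := by
        have : σ j = ((e ⟨j, hj⟩ : {x : Fin n // x ∈ T}) : Fin n) := by
          simp only [σ, Equiv.subtypeCongr, Equiv.trans_apply,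
            Equiv.sumCompl_symm_apply_of_pos hj, Equiv.sumCongr_apply, Sum.map_inl,
            Equiv.sumCompl_apply_inl]
        rw [this]; exact (e ⟨j, hj⟩).2
      simp [vert, hj, hmem]
    · have hmem : ¬ (σ j ∈ T) := by
        have : σ j = ((f ⟨j, hj⟩ : {x : Fin n // ¬ x ∈ T}) : Fin n) := by
          simp only [σ, Equiv.subtypeCongr, Equiv.trans_apply,
            Equiv.sumCompl_symm_apply_of_neg hj, Equiv.sumCongr_apply, Sum.map_inr,
            Equiv.sumCompl_apply_inr]
        rw [this]; exact (f ⟨j, hj⟩).2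
      simp [vert, hj, hmem]
  unfold mPoly
  apply Finset.sum_congr rfl
  intro i _
  congr 1
  apply Finset.sum_nbij' (fun J => J.map σ.toEmbedding) (fun J => J.map σ.symm.toEmbedding)
  · intro J hJ
    rw [Finset.mem_powersetCard_univ] at hJ ⊢
    rw [Finset.card_map, hJ]
  · intro J hJ
    rw [Finset.mem_powersetCard_univ] at hJ ⊢
    rw [Finset.card_map, hJ]
  · intro J _
    rw [Finset.map_map]
    ext a
    simp
  · intro J _
    rw [Finset.map_map]
    ext a
    simp
  · intro J _
    rw [Finset.prod_map]
    apply Finset.prod_congr rfl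
    intro j _
    exact (hσ j).symm

lemma xpt_eq_vert {n : ℕ} {ℓ u : ℝ} (k : ℕ) :
    xpt n ℓ u k = vert n ℓ u (univ.filter fun j : Fin n => (j : ℕ) < k) := by
  funext j; simp [xpt, vert]

lemma card_filter_lt {n k : ℕ} (hk : k ≤ n) :
    (univ.filter fun j : Fin n => (j : ℕ) < k).card = k := by
  have : (univ.filter fun j : Fin n => (j : ℕ) < k)
      = (univ : Finset (Fin k)).map (Fin.castLEEmb hk) := by
    ext j
    simp only [Finset.mem_filter, Finset.mem_univ, true_and, Finset.mem_map]
    constructor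
    · intro hj
      exact ⟨⟨(j : ℕ), hj⟩, by ext; simp⟩
    · rintro ⟨i, _, rfl⟩
      simpa using i.2
  rw [this, Finset.card_map, Finset.card_univ, Fintype.card_fin]

lemma ineqLhs_vtx {n : ℕ} {ℓ u : ℝ} {c : ℕ → ℝ} (β₀ : ℝ) (β : Fin n → ℝ) (β' : ℝ) (k : ℕ) :
    ineqLhs n β₀ β β' (vtx n ℓ u c k) = Lk n ℓ u β₀ β k + β' * mval n ℓ u c k := by
  unfold ineqLhs vtx Lk xpt
  simp only [mul_ite]
  rw [Finset.sum_ite]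
  have h2 : Finset.filter (fun j : Fin n => ¬ (j : ℕ) < k) univ
      = Finset.filter (fun j : Fin n => k ≤ (j : ℕ)) univ := by
    apply Finset.filter_congr; intro j _; simp [not_lt]
  rw [h2, ← Finset.sum_mul, ← Finset.sum_mul]
  ring

lemma ineqLhs_vert {n : ℕ} {ℓ u : ℝ} {c : ℕ → ℝ} (β₀ : ℝ) (β : Fin n → ℝ) (β' : ℝ)
    (S : Finset (Fin n)) :
    ineqLhs n β₀ β β' (vert n ℓ u S, mPoly n c (vert n ℓ u S))
      = β₀ + u * ∑ j ∈ S, β j + ℓ * ∑ j ∈ Sᶜ, β j + β' * mPoly n c (vert n ℓ u S) := by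
  unfold ineqLhs vert
  simp only [mul_ite]
  rw [Finset.sum_ite]
  have h1 : Finset.filter (fun j : Fin n => j ∈ S) univ = S := by
    ext j; simp
  have h2 : Finset.filter (fun j : Fin n => ¬ j ∈ S) univ = Sᶜ := by
    ext j; simp
  rw [h1, h2, ← Finset.sum_mul, ← Finset.sum_mul]
  ring

lemma vtx_mem_Gset {n : ℕ} {ℓ u : ℝ} {c : ℕ → ℝ} (hlu : ℓ < u) (k : ℕ) :
    vtx n ℓ u c k ∈ Gset n ℓ u c := by
  refine ⟨fun j => ?_, rfl⟩
  unfold vtx xpt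
  simp only
  split <;> exact ⟨by linarith, by linarith⟩

/-- key identity: lhs at a vertex vs `L_k` at the sorted vertex -/
lemma ineqLhs_vert_eq {n : ℕ} {ℓ u : ℝ} {c : ℕ → ℝ} (β₀ : ℝ) (β : Fin n → ℝ) (β' : ℝ)
    (S : Finset (Fin n)) (k : ℕ) (hk : S.card = k) (hkn : k ≤ n) :
    ineqLhs n β₀ β β' (vert n ℓ u S, mPoly n c (vert n ℓ u S))
      = (Lk n ℓ u β₀ β k + β' * mval n ℓ u c k)
        + (u - ℓ) * (∑ j ∈ S, β j - ∑ j ∈ univ.filter (fun j : Fin n => (j : ℕ) < k), β j) := by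
  set T := univ.filter (fun j : Fin n => (j : ℕ) < k) with hT
  have hTcard : T.card = k := card_filter_lt hkn
  have hm : mPoly n c (vert n ℓ u S) = mval n ℓ u c k := by
    rw [mval, xpt_eq_vert]
    exact mPoly_vert_congr S T (by rw [hk, hTcard])
  rw [ineqLhs_vert, hm]
  have hLk : Lk n ℓ u β₀ β k = β₀ + u * ∑ j ∈ T, β j + ℓ * (∑ j, β j - ∑ j ∈ T, β j) := by
    unfold Lk
    have : Finset.filter (fun j : Fin n => k ≤ (j : ℕ)) univ = Tᶜ := by
      ext j; simp [hT, not_lt]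
    rw [this]
    have hcompl : ∑ j ∈ Tᶜ, β j = ∑ j, β j - ∑ j ∈ T, β j := by
      have := Finset.sum_add_sum_compl T β
      linarith
    rw [hcompl]
  have hScompl : ∑ j ∈ Sᶜ, β j = ∑ j, β j - ∑ j ∈ S, β j := by
    have := Finset.sum_add_sum_compl S β
    linarith
  rw [hLk, hScompl]
  ring

/-- transfer of tightness at a vertex from the hat inequality to the bar inequality -/
lemma vert_transfer {n : ℕ} {ℓ u : ℝ} {c : ℕ → ℝ} (hlu : ℓ < u)
    {βb₀ : ℝ} {βb : Fin n → ℝ} {βh₀ : ℝ} {βh : Fin n → ℝ} {β' : ℝ}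
    (hmonoh : Monotone βh)
    (hvalidh : IsValid n ℓ u c βh₀ βh β')
    (h1 : ∀ p q : Fin n, p < q → βh p = βh q → βb p = βb q)
    (hsub : ∀ k, k ≤ n → Lk n ℓ u βh₀ βh k + β' * mval n ℓ u c k = 0 →
        Lk n ℓ u βb₀ βb k + β' * mval n ℓ u c k = 0)
    (S : Finset (Fin n))
    (hexact : ineqLhs n βh₀ βh β' (vert n ℓ u S, mPoly n c (vert n ℓ u S)) = 0) :
    ineqLhs n βb₀ βb β' (vert n ℓ u S, mPoly n c (vert n ℓ u S)) = 0 := by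
  classical
  set k := S.card with hkdef
  have hkn : k ≤ n := by
    calc k ≤ (univ : Finset (Fin n)).card := Finset.card_le_univ S
    _ = n := by rw [Finset.card_univ, Fintype.card_fin]
  set T := univ.filter (fun j : Fin n => (j : ℕ) < k) with hTdef
  -- order embedding enumerating S
  let e : Fin k ↪o Fin n := S.orderEmbOfFin rfl
  have hie : ∀ m : ℕ, ∀ i : Fin k, (i : ℕ) = m → m ≤ ((e i : Fin n) : ℕ) := by
    intro m
    induction m with
    | zero => intro i _; exact Nat.zero_le _
    | succ m ih =>
      intro i him
      have hm : m < k := by omega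
      have hlt : (⟨m, hm⟩ : Fin k) < i := by rw [Fin.lt_def]; simp; omega
      have h2 : e ⟨m, hm⟩ < e i := e.strictMono hlt
      have h3 : m ≤ ((e ⟨m, hm⟩ : Fin n) : ℕ) := ih _ rfl
      have h4 := Fin.lt_def.1 h2
      omega
  have hle : ∀ i : Fin k, Fin.castLE hkn i ≤ e i := by
    intro i
    rw [Fin.le_def]
    simpa using hie (i : ℕ) i rfl
  -- sums over S and T as sums over Fin k
  have hSmap : Finset.univ.map e.toEmbedding = S := by
    ext j
    simp only [Finset.mem_map, Finset.mem_univ, true_and, RelEmbedding.coe_toEmbedding]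
    constructor
    · rintro ⟨i, rfl⟩; exact Finset.orderEmbOfFin_mem _ _ _
    · intro hj
      have : j ∈ Set.range e := by
        rw [Finset.range_orderEmbOfFin]; exact hj
      exact this
  have hTmap : Finset.univ.map (Fin.castLEEmb hkn) = T := by
    ext j
    simp only [Finset.mem_map, Finset.mem_univ, true_and, hTdef, Finset.mem_filter,
      RelEmbedding.coe_toEmbedding]
    constructor
    · rintro ⟨i, rfl⟩; simpa using i.2
    · intro hj
      exact ⟨⟨(j : ℕ), hj⟩, by ext; simp⟩
  have hSsum : ∀ β : Fin n → ℝ, ∑ j ∈ S, β j = ∑ i : Fin k, β (e i) := by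
    intro β; rw [← hSmap, Finset.sum_map]; rfl
  have hTsum : ∀ β : Fin n → ℝ, ∑ j ∈ T, β j = ∑ i : Fin k, β (Fin.castLE hkn i) := by
    intro β; rw [← hTmap, Finset.sum_map]; rfl
  -- decompose the exactness
  rw [ineqLhs_vert_eq βh₀ βh β' S k rfl hkn] at hexact
  have hL : 0 ≤ Lk n ℓ u βh₀ βh k + β' * mval n ℓ u c k := by
    have := hvalidh (vtx n ℓ u c k) (subset_convexHull ℝ _ (vtx_mem_Gset hlu k))
    rwa [ineqLhs_vtx] at this
  have hdiffsum : ∑ j ∈ S, βh j - ∑ j ∈ T, βh j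
      = ∑ i : Fin k, (βh (e i) - βh (Fin.castLE hkn i)) := by
    rw [hSsum, hTsum, Finset.sum_sub_distrib]
  have hterm_nonneg : ∀ i : Fin k, 0 ≤ βh (e i) - βh (Fin.castLE hkn i) :=
    fun i => sub_nonneg.2 (hmonoh (hle i))
  have hdiff_nonneg : 0 ≤ ∑ j ∈ S, βh j - ∑ j ∈ T, βh j := by
    rw [hdiffsum]; exact Finset.sum_nonneg fun i _ => hterm_nonneg i
  have hfac : 0 ≤ (u - ℓ) * (∑ j ∈ S, βh j - ∑ j ∈ T, βh j) :=
    mul_nonneg (by linarith) hdiff_nonneg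
  have hL0 : Lk n ℓ u βh₀ βh k + β' * mval n ℓ u c k = 0 := by linarith
  have hfac0 : (u - ℓ) * (∑ j ∈ S, βh j - ∑ j ∈ T, βh j) = 0 := by linarith
  have hdiff0 : ∑ j ∈ S, βh j - ∑ j ∈ T, βh j = 0 := by
    rcases mul_eq_zero.1 hfac0 with h | h
    · exfalso; linarith
    · exact h
  -- termwise equalities for hat, hence for bar
  have hterm0 : ∀ i ∈ (univ : Finset (Fin k)), βh (e i) - βh (Fin.castLE hkn i) = 0 := by
    rw [hdiffsum] at hdiff0
    exact (Finset.sum_eq_zero_iff_of_nonneg fun i _ => hterm_nonneg i).1 hdiff0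
  have hbarterm : ∀ i : Fin k, βb (e i) = βb (Fin.castLE hkn i) := by
    intro i
    rcases eq_or_lt_of_le (hle i) with heq | hlt
    · rw [← heq]
    · exact (h1 _ _ hlt (by have := hterm0 i (Finset.mem_univ i); linarith)).symm
  have hbardiff : ∑ j ∈ S, βb j - ∑ j ∈ T, βb j = 0 := by
    rw [hSsum, hTsum, ← Finset.sum_sub_distrib]
    apply Finset.sum_eq_zero
    intro i _
    rw [hbarterm i, sub_self]
  rw [ineqLhs_vert_eq βb₀ βb β' S k rfl hkn, hbardiff, mul_zero, add_zero]
  exact hsub k hkn hL0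

section TransferSection
variable {n : ℕ} {ℓ u : ℝ} {c : ℕ → ℝ}
    {βb₀ : ℝ} {βb : Fin n → ℝ} {βh₀ : ℝ} {βh : Fin n → ℝ} {β' : ℝ}

/-- transfer of tightness at a point of `G` -/
lemma point_transfer (hlu : ℓ < u)
    (hvalidh : IsValid n ℓ u c βh₀ βh β')
    (hvert : ∀ S : Finset (Fin n),
      ineqLhs n βh₀ βh β' (vert n ℓ u S, mPoly n c (vert n ℓ u S)) = 0 →
      ineqLhs n βb₀ βb β' (vert n ℓ u S, mPoly n c (vert n ℓ u S)) = 0)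
    {x : Fin n → ℝ} (hx : x ∈ Xbox n ℓ u)
    (hexact : ineqLhs n βh₀ βh β' (x, mPoly n c x) = 0) :
    ineqLhs n βb₀ βb β' (x, mPoly n c x) = 0 := by
  rw [ineqLhs_decomp hlu] at hexact ⊢
  have hterm : ∀ S ∈ (univ : Finset (Fin n)).powerset,
      0 ≤ wt n ℓ u S x * ineqLhs n βh₀ βh β' (vert n ℓ u S, mPoly n c (vert n ℓ u S)) :=
    fun S _ => mul_nonneg (wt_nonneg hlu hx S)
      (hvalidh _ (subset_convexHull ℝ _ (vert_mem_Gset hlu S)))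
  have h0 := (Finset.sum_eq_zero_iff_of_nonneg hterm).1 hexact
  apply Finset.sum_eq_zero
  intro S hS
  rcases mul_eq_zero.1 (h0 S hS) with h | h
  · rw [h, zero_mul]
  · rw [hvert S h, mul_zero]

/-- affine combination property of `ineqLhs` -/
lemma ineqLhs_sum {ι : Type} (β₀ : ℝ) (β : Fin n → ℝ) (β'' : ℝ) (t : Finset ι) (w : ι → ℝ)
    (z : ι → (Fin n → ℝ) × ℝ) (hw1 : ∑ i ∈ t, w i = 1) :
    ineqLhs n β₀ β β'' (∑ i ∈ t, w i • z i) = ∑ i ∈ t, w i * ineqLhs n β₀ β β'' (z i) := by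
  unfold ineqLhs
  simp_rw [mul_add, Finset.sum_add_distrib, ← Finset.sum_mul, hw1, one_mul]
  congr 1
  · congr 1
    have hfst : (∑ i ∈ t, w i • z i).1 = ∑ i ∈ t, w i • (z i).1 := by
      simp [Prod.fst_sum]
    rw [hfst]
    simp_rw [Finset.sum_apply, Pi.smul_apply, smul_eq_mul, Finset.mul_sum]
    rw [Finset.sum_comm]
    apply Finset.sum_congr rfl
    intro i _
    apply Finset.sum_congr rfl
    intro j _
    ring
  · have hsnd : (∑ i ∈ t, w i • z i).2 = ∑ i ∈ t, w i * (z i).2 := by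
      simp [Prod.snd_sum]
    rw [hsnd, Finset.mul_sum]
    apply Finset.sum_congr rfl
    intro i _
    ring

/-- transfer of tightness on the convex hull -/
lemma conv_transfer (hlu : ℓ < u)
    (hvalidh : IsValid n ℓ u c βh₀ βh β')
    (hpt : ∀ x ∈ Xbox n ℓ u,
      ineqLhs n βh₀ βh β' (x, mPoly n c x) = 0 → ineqLhs n βb₀ βb β' (x, mPoly n c x) = 0)
    {p : (Fin n → ℝ) × ℝ} (hp : p ∈ convexHull ℝ (Gset n ℓ u c))
    (hexact : ineqLhs n βh₀ βh β' p = 0) :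
    ineqLhs n βb₀ βb β' p = 0 := by
  rw [_root_.convexHull_eq] at hp
  obtain ⟨ι, t, w, z, hw0, hw1, hz, hcm⟩ := hp
  rw [Finset.centerMass_eq_of_sum_1 _ _ hw1] at hcm
  subst hcm
  rw [ineqLhs_sum _ _ _ _ _ _ hw1] at hexact ⊢
  have hzG : ∀ i ∈ t, z i = ((z i).1, mPoly n c (z i).1) := by
    intro i hi
    have := (hz i hi).2
    exact Prod.ext rfl this
  have hterm : ∀ i ∈ t, 0 ≤ w i * ineqLhs n βh₀ βh β' (z i) := by
    intro i hi
    exact mul_nonneg (hw0 i hi) (hvalidh _ (subset_convexHull ℝ _ (hz i hi)))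
  have h0 := (Finset.sum_eq_zero_iff_of_nonneg hterm).1 hexact
  apply Finset.sum_eq_zero
  intro i hi
  rcases mul_eq_zero.1 (h0 i hi) with h | h
  · rw [h, zero_mul]
  · rw [hzG i hi] at h ⊢
    rw [hpt _ (hz i hi).1 h, mul_zero]

end TransferSection

/-- the linear part of `ineqLhs` as a linear map -/
noncomputable def lfun (n : ℕ) (β : Fin n → ℝ) (β'' : ℝ) : ((Fin n → ℝ) × ℝ) →ₗ[ℝ] ℝ where
  toFun p := ∑ j, β j * p.1 j + β'' * p.2
  map_add' p q := by
    simp only [Prod.fst_add, Pi.add_apply, Prod.snd_add, mul_add, Finset.sum_add_distrib]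
    ring
  map_smul' r p := by
    simp only [Prod.smul_fst, Prod.smul_snd, Pi.smul_apply, smul_eq_mul, RingHom.id_apply]
    rw [mul_add, Finset.mul_sum]
    congr 1
    · exact Finset.sum_congr rfl fun j _ => by ring
    · ring

lemma ineqLhs_eq_lfun {n : ℕ} (β₀ : ℝ) (β : Fin n → ℝ) (β'' : ℝ) (p : (Fin n → ℝ) × ℝ) :
    ineqLhs n β₀ β β'' p = β₀ + lfun n β β'' p := by
  simp only [ineqLhs, lfun, LinearMap.coe_mk, AddHom.coe_mk]
  ring

lemma functional_eq {n : ℕ} {βb₀ : ℝ} {βb : Fin n → ℝ} {βh₀ : ℝ} {βh : Fin n → ℝ} {β' : ℝ}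
    (hβ' : β' = 1 ∨ β' = -1)
    (pts : Fin (n + 1) → (Fin n → ℝ) × ℝ)
    (haff : AffineIndependent ℝ pts)
    (hh : ∀ i, ineqLhs n βh₀ βh β' (pts i) = 0)
    (hb : ∀ i, ineqLhs n βb₀ βb β' (pts i) = 0) :
    βb₀ = βh₀ ∧ βb = βh := by
  classical
  have hβ'0 : β' ≠ 0 := by rcases hβ' with h | h <;> rw [h] <;> norm_num
  set Lh := lfun n βh β' with hLh
  set D := lfun n βb β' - lfun n βh β' with hD
  set v : {x : Fin (n + 1) // x ≠ 0} → ((Fin n → ℝ) × ℝ) := fun i => pts ↑i -ᵥ pts 0 with hv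
  have li : LinearIndependent ℝ v :=
    (affineIndependent_iff_linearIndependent_vsub ℝ pts 0).1 haff
  have hLh_pts : ∀ i, Lh (pts i) = -βh₀ := by
    intro i
    have := hh i
    rw [ineqLhs_eq_lfun] at this
    linarith
  have hLb_pts : ∀ i, (lfun n βb β') (pts i) = -βb₀ := by
    intro i
    have := hb i
    rw [ineqLhs_eq_lfun] at this
    linarith
  have hLh_v : ∀ i, Lh (v i) = 0 := by
    intro i
    simp only [hv, vsub_eq_sub, map_sub, hLh_pts, sub_self]
  have hD_v : ∀ i, D (v i) = 0 := by
    intro i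
    simp only [hD, hv, vsub_eq_sub, LinearMap.sub_apply, map_sub, hLh_pts, hLb_pts, sub_self]
    rw [show (lfun n βh β') (pts ↑i) = -βh₀ from hLh_pts i, show (lfun n βh β') (pts 0) = -βh₀ from hLh_pts 0]; ring
  set ey : ((Fin n → ℝ) × ℝ) := (0, 1) with hey
  have hD_ey : D ey = 0 := by
    simp [hD, lfun, hey]
  have hLh_ey : Lh ey = β' := by
    simp [hLh, lfun, hey]
  set W := Submodule.span ℝ (Set.range v) with hW
  have hWLh : W ≤ LinearMap.ker Lh := by
    rw [Submodule.span_le]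
    rintro x ⟨i, rfl⟩
    exact hLh_v i
  have heyW : ey ∉ W := by
    intro hmem
    have : Lh ey = 0 := hWLh hmem
    rw [hLh_ey] at this
    exact hβ'0 this
  have hey0 : ey ≠ 0 := by
    intro h
    have : (1 : ℝ) = 0 := congrArg Prod.snd h
    norm_num at this
  set K := Submodule.span ℝ {ey} with hK
  have hWK : W ⊓ K = ⊥ := by
    rw [eq_bot_iff]
    rintro x ⟨hxW, hxK⟩
    obtain ⟨a, rfl⟩ := Submodule.mem_span_singleton.1 hxK
    rcases eq_or_ne a 0 with rfl | ha
    · simp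
    · exfalso
      apply heyW
      have := W.smul_mem a⁻¹ hxW
      rwa [smul_smul, inv_mul_cancel₀ ha, one_smul] at this
  have hcard : Fintype.card {x : Fin (n + 1) // x ≠ 0} = n := by
    simp [Fintype.card_subtype_compl]
  have hfinW : Module.finrank ℝ W = n := by
    rw [hW, finrank_span_eq_card li, hcard]
  have hfinK : Module.finrank ℝ K = 1 := finrank_span_singleton hey0
  have hfinE : Module.finrank ℝ ((Fin n → ℝ) × ℝ) = n + 1 := by
    simp [Module.finrank_prod, Module.finrank_fin_fun]
  have hsup : W ⊔ K = ⊤ := by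
    apply Submodule.eq_top_of_finrank_eq
    have := Submodule.finrank_sup_add_finrank_inf_eq W K
    rw [hWK, finrank_bot, add_zero, hfinW, hfinK] at this
    rw [this, hfinE]
  have hDzero : ∀ x : ((Fin n → ℝ) × ℝ), D x = 0 := by
    have hle : W ⊔ K ≤ LinearMap.ker D := by
      apply sup_le
      · rw [Submodule.span_le]
        rintro x ⟨i, rfl⟩
        exact hD_v i
      · rw [Submodule.span_le]
        rintro x rfl
        exact hD_ey
    intro x
    have : x ∈ LinearMap.ker D := hle (hsup ▸ Submodule.mem_top)
    exact this
  have hβeq : βb = βh := by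
    funext j
    have := hDzero (Pi.single j 1, 0)
    simp only [hD, LinearMap.sub_apply, lfun, LinearMap.coe_mk, AddHom.coe_mk] at this
    simp only [Pi.single_apply, mul_ite, mul_one, mul_zero, Finset.sum_ite_eq',
      Finset.mem_univ, if_true, add_zero] at this
    linarith
  refine ⟨?_, hβeq⟩
  have h0h := hh 0
  have h0b := hb 0
  rw [ineqLhs_eq_lfun] at h0h h0b
  rw [hβeq] at h0b
  linarith

/-- Given two valid core inequalities with the same `β′`, if
(1) `β̄_p = β̄_q` whenever `p < q` and `β̂_p = β̂_q`, and (2) the set of indices `k` where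
the second holds exactly at `(x^k, m(x^k))` is a strict subset of that of the first,
then the second inequality is not facet-defining. -/
theorem stmt8 (n : ℕ) (hn : 2 ≤ n) (ℓ u : ℝ) (hlu : ℓ < u) (c : ℕ → ℝ)
    (βb₀ : ℝ) (βb : Fin n → ℝ) (βh₀ : ℝ) (βh : Fin n → ℝ) (β' : ℝ)
    (hcoreb : IsCore n βb β') (hvalidb : IsValid n ℓ u c βb₀ βb β')
    (hcoreh : IsCore n βh β') (hvalidh : IsValid n ℓ u c βh₀ βh β')
    (h1 : ∀ p q : Fin n, p < q → βh p = βh q → βb p = βb q)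
    (h2 : {k : ℕ | k ≤ n ∧ Lk n ℓ u βh₀ βh k + β' * mval n ℓ u c k = 0} ⊂
          {k : ℕ | k ≤ n ∧ Lk n ℓ u βb₀ βb k + β' * mval n ℓ u c k = 0}) :
    ¬ IsFacet n ℓ u c βh₀ βh β' := by
  rintro ⟨pts, haff, hpts⟩
  have hsub : ∀ k, k ≤ n → Lk n ℓ u βh₀ βh k + β' * mval n ℓ u c k = 0 →
      Lk n ℓ u βb₀ βb k + β' * mval n ℓ u c k = 0 := fun k hk h0 =>
    (h2.subset ⟨hk, h0⟩).2
  have hvert : ∀ S : Finset (Fin n),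
      ineqLhs n βh₀ βh β' (vert n ℓ u S, mPoly n c (vert n ℓ u S)) = 0 →
      ineqLhs n βb₀ βb β' (vert n ℓ u S, mPoly n c (vert n ℓ u S)) = 0 :=
    fun S hS => vert_transfer hlu hcoreh.2 hvalidh h1 hsub S hS
  have hpt : ∀ x ∈ Xbox n ℓ u,
      ineqLhs n βh₀ βh β' (x, mPoly n c x) = 0 →
      ineqLhs n βb₀ βb β' (x, mPoly n c x) = 0 :=
    fun x hx hex => point_transfer hlu hvalidh hvert hx hex
  have hb : ∀ i, ineqLhs n βb₀ βb β' (pts i) = 0 :=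
    fun i => conv_transfer hlu hvalidh hpt (hpts i).1 (hpts i).2
  have hh : ∀ i, ineqLhs n βh₀ βh β' (pts i) = 0 := fun i => (hpts i).2
  obtain ⟨h0eq, hβeq⟩ := functional_eq hcoreh.1 pts haff hh hb
  have hseteq : {k : ℕ | k ≤ n ∧ Lk n ℓ u βh₀ βh k + β' * mval n ℓ u c k = 0}
      = {k : ℕ | k ≤ n ∧ Lk n ℓ u βb₀ βb k + β' * mval n ℓ u c k = 0} := by
    rw [← h0eq, ← hβeq]
  rw [hseteq] at h2
  exact ssubset_irrefl _ h2
end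

section
/- Let β₀ + Σ_{j=1}^n β_j x_j + β′ y ≥ 0 be a core facet of conv(G). Then the sets {k ∈ {0,…,n−1} : L_k(β₀,β) + β′·m(x^k) = 0} and {k ∈ {1,…,n} : L_k(β₀,β) + β′·m(x^k) = 0} are nonempty, and, letting r be the minimum of the first set and s the maximum of the second set, one has β_1 = β_2 = … = β_{r+1} and β_s = β_{s+1} = … = β_n. -/
open Finset

/-! ### Auxiliary lemmas -/

section Aux

open Finset

/-- Initial segment `{0, …, k-1}` of `Fin n`. -/
def Fk (n k : ℕ) : Finset (Fin n) := Finset.univ.filter (fun j : Fin n => (j : ℕ) < k)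

lemma card_Fk (n k : ℕ) (h : k ≤ n) : (Fk n k).card = k := by
  classical
  have : Fk n k = (Finset.range k).attachFin
      (fun m hm => lt_of_lt_of_le (Finset.mem_range.1 hm) h) := by
    ext j
    simp [Fk, Finset.mem_attachFin]
  rw [this, Finset.card_attachFin, Finset.card_range]

lemma minsum (n k : ℕ) (β : Fin n → ℝ) (hmono : Monotone β) (T : Finset (Fin n))
    (hcard : T.card = k) (hk : k ≤ n) :
    ∑ j ∈ Fk n k, β j ≤ ∑ j ∈ T, β j := by
  classical
  have hF : (Fk n k).card = k := card_Fk n k hk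
  by_cases hAB : Fk n k \ T = ∅
  · have hsub : Fk n k ⊆ T := by
      intro a ha
      by_contra hat
      exact (Finset.eq_empty_iff_forall_notMem.1 hAB a) (Finset.mem_sdiff.2 ⟨ha, hat⟩)
    have : Fk n k = T := Finset.eq_of_subset_of_card_le hsub (by omega)
    rw [this]
  · obtain ⟨a0, ha0⟩ := Finset.nonempty_iff_ne_empty.2 hAB
    have hk1 : 1 ≤ k := by
      have := (Finset.mem_sdiff.1 ha0).1
      simp only [Fk, Finset.mem_filter] at this
      omega
    have hkn : k - 1 < n := by omega
    set m : Fin n := ⟨k - 1, hkn⟩ with hm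
    have hcc : (Fk n k \ T).card = (T \ Fk n k).card := by
      have h1 := Finset.card_sdiff_add_card_inter (Fk n k) T
      have h2 := Finset.card_sdiff_add_card_inter T (Fk n k)
      rw [Finset.inter_comm] at h2
      omega
    have hA : ∑ j ∈ Fk n k \ T, β j ≤ (Fk n k \ T).card • β m := by
      apply Finset.sum_le_card_nsmul
      intro x hx
      apply hmono
      have : (x : ℕ) < k := by
        have := (Finset.mem_sdiff.1 hx).1
        simpa [Fk] using this
      show (x : ℕ) ≤ k - 1
      omega
    have hB : (T \ Fk n k).card • β m ≤ ∑ j ∈ T \ Fk n k, β j := by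
      apply Finset.card_nsmul_le_sum
      intro x hx
      apply hmono
      have : ¬ (x : ℕ) < k := by
        have := (Finset.mem_sdiff.1 hx).2
        simpa [Fk] using this
      show k - 1 ≤ (x : ℕ)
      omega
    have e1 : ∑ j ∈ Fk n k, β j = ∑ j ∈ Fk n k ∩ T, β j + ∑ j ∈ Fk n k \ T, β j :=
      (Finset.sum_inter_add_sum_sdiff _ _ _).symm
    have e2 : ∑ j ∈ T, β j = ∑ j ∈ T ∩ Fk n k, β j + ∑ j ∈ T \ Fk n k, β j :=
      (Finset.sum_inter_add_sum_sdiff _ _ _).symm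
    rw [e1, e2, Finset.inter_comm]
    rw [hcc] at hA
    linarith [hA.trans hB]

lemma mPoly_perm (n : ℕ) (c : ℕ → ℝ) (σ : Equiv.Perm (Fin n)) (x : Fin n → ℝ) :
    mPoly n c (x ∘ σ) = mPoly n c x := by
  unfold mPoly
  refine Finset.sum_congr rfl fun i _ => ?_
  congr 1
  refine Finset.sum_nbij' (fun J => J.image σ) (fun J => J.image σ.symm) ?_ ?_ ?_ ?_ ?_
  · intro J hJ
    simp only [Finset.mem_powersetCard] at hJ ⊢
    exact ⟨Finset.subset_univ _, by rw [Finset.card_image_of_injective _ σ.injective, hJ.2]⟩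
  · intro J hJ
    simp only [Finset.mem_powersetCard] at hJ ⊢
    exact ⟨Finset.subset_univ _, by rw [Finset.card_image_of_injective _ σ.symm.injective, hJ.2]⟩
  · intro J _
    ext a; simp [Finset.mem_image]
  · intro J _
    ext a; simp [Finset.mem_image]
  · intro J _
    rw [Finset.prod_image (fun a _ b _ h => σ.injective h)]
    rfl

lemma mPoly_indicator (n : ℕ) (c : ℕ → ℝ) (ℓ u : ℝ) (T T' : Finset (Fin n))
    (h : T.card = T'.card) :
    mPoly n c (fun i => if i ∈ T then u else ℓ)
      = mPoly n c (fun i => if i ∈ T' then u else ℓ) := by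
  classical
  have hcompl : Tᶜ.card = T'ᶜ.card := by
    simp [Finset.card_compl, h]
  let e1 : {x : Fin n // x ∈ T'} ≃ {x : Fin n // x ∈ T} := Finset.equivOfCardEq h.symm
  let e2 : {x : Fin n // ¬ x ∈ T'} ≃ {x : Fin n // ¬ x ∈ T} :=
    ((Equiv.subtypeEquivRight (fun x => (Finset.mem_compl).symm)).trans
      (Finset.equivOfCardEq hcompl.symm)).trans
      (Equiv.subtypeEquivRight (fun x => Finset.mem_compl))
  let σ : Equiv.Perm (Fin n) :=
    (Equiv.sumCompl (· ∈ T')).symm.trans ((e1.sumCongr e2).trans (Equiv.sumCompl (· ∈ T)))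
  have key : ∀ i, σ i ∈ T ↔ i ∈ T' := by
    intro i
    by_cases hi : i ∈ T'
    · have : σ i = ((e1 ⟨i, hi⟩ : {x // x ∈ T}) : Fin n) := by
        simp [σ, Equiv.sumCompl_symm_apply_of_pos hi]
      rw [this]
      simp only [hi, iff_true]
      exact (e1 ⟨i, hi⟩).2
    · have : σ i = ((e2 ⟨i, hi⟩ : {x // ¬ x ∈ T}) : Fin n) := by
        simp [σ, Equiv.sumCompl_symm_apply_of_neg hi]
      rw [this]
      simp only [hi, iff_false]
      exact (e2 ⟨i, hi⟩).2
  have : (fun i => if i ∈ T' then u else ℓ) = (fun i => if i ∈ T then u else ℓ) ∘ σ := by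
    funext i
    simp only [Function.comp_apply]
    by_cases hi : i ∈ T'
    · simp [hi, (key i).2 hi]
    · have : σ i ∉ T := fun h => hi ((key i).1 h)
      simp [hi, this]
  rw [this, mPoly_perm]

lemma sum_indicator (n : ℕ) (T : Finset (Fin n)) (β : Fin n → ℝ) (ℓ u : ℝ) :
    ∑ j, β j * (if j ∈ T then u else ℓ)
      = u * ∑ j ∈ T, β j + ℓ * (∑ j, β j - ∑ j ∈ T, β j) := by
  classical
  rw [← Finset.sum_filter_add_sum_filter_not Finset.univ (· ∈ T)]
  have h1 : Finset.univ.filter (· ∈ T) = T := by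
    ext a; simp
  have h2 : Finset.univ.filter (fun a => ¬ a ∈ T) = Tᶜ := by
    ext a; simp
  rw [h1, h2]
  have h3 : ∑ j ∈ Tᶜ, β j = ∑ j, β j - ∑ j ∈ T, β j := by
    have := Finset.sum_compl_add_sum T β
    linarith
  have h4 : ∑ j ∈ T, β j * u = u * ∑ j ∈ T, β j := by
    rw [Finset.mul_sum]; exact Finset.sum_congr rfl fun _ _ => mul_comm _ _
  have h5 : ∑ j ∈ Tᶜ, β j * ℓ = ℓ * ∑ j ∈ Tᶜ, β j := by
    rw [Finset.mul_sum]; exact Finset.sum_congr rfl fun _ _ => mul_comm _ _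
  have h6 : ∑ j ∈ T, (fun j => β j * if j ∈ T then u else ℓ) j = ∑ j ∈ T, β j * u := by
    refine Finset.sum_congr rfl fun a ha => ?_; simp [ha]
  have h7 : ∑ j ∈ Tᶜ, (fun j => β j * if j ∈ T then u else ℓ) j = ∑ j ∈ Tᶜ, β j * ℓ := by
    refine Finset.sum_congr rfl fun a ha => ?_
    have : a ∉ T := by simpa [Finset.mem_compl] using ha
    simp [this]
  rw [h6, h7, h4, h5, h3]

lemma prod_update_affine (n : ℕ) (x : Fin n → ℝ) (j : Fin n) (a b s t : ℝ)
    (hab : a + b = 1) (J : Finset (Fin n)) :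
    ∏ i ∈ J, Function.update x j (a * s + b * t) i
      = a * ∏ i ∈ J, Function.update x j s i + b * ∏ i ∈ J, Function.update x j t i := by
  classical
  by_cases hj : j ∈ J
  · rw [Finset.prod_update_of_mem hj, Finset.prod_update_of_mem hj, Finset.prod_update_of_mem hj]
    ring
  · rw [Finset.prod_update_of_notMem hj, Finset.prod_update_of_notMem hj,
      Finset.prod_update_of_notMem hj]
    linear_combination (-∏ i ∈ J, x i) * hab

lemma mPoly_update_affine (n : ℕ) (c : ℕ → ℝ) (x : Fin n → ℝ) (j : Fin n) (a b s t : ℝ)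
    (hab : a + b = 1) :
    mPoly n c (Function.update x j (a * s + b * t))
      = a * mPoly n c (Function.update x j s) + b * mPoly n c (Function.update x j t) := by
  unfold mPoly
  rw [Finset.mul_sum, Finset.mul_sum, ← Finset.sum_add_distrib]
  refine Finset.sum_congr rfl fun i _ => ?_
  have hinner : ∑ J ∈ Finset.powersetCard i (Finset.univ : Finset (Fin n)),
        ∏ k ∈ J, Function.update x j (a * s + b * t) k
      = a * ∑ J ∈ Finset.powersetCard i (Finset.univ : Finset (Fin n)),
          ∏ k ∈ J, Function.update x j s k
        + b * ∑ J ∈ Finset.powersetCard i (Finset.univ : Finset (Fin n)),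
          ∏ k ∈ J, Function.update x j t k := by
    rw [Finset.mul_sum, Finset.mul_sum, ← Finset.sum_add_distrib]
    exact Finset.sum_congr rfl fun J _ => prod_update_affine n x j a b s t hab J
  rw [hinner]
  ring

lemma sum_update (n : ℕ) (β x : Fin n → ℝ) (j : Fin n) (v : ℝ) :
    ∑ i, β i * Function.update x j v i
      = β j * v + ∑ i ∈ Finset.univ.erase j, β i * x i := by
  classical
  rw [← Finset.add_sum_erase _ _ (Finset.mem_univ j)]
  simp only [Function.update_self]
  congr 1
  refine Finset.sum_congr rfl fun i hi => ?_
  rw [Function.update_of_ne (Finset.ne_of_mem_erase hi)]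

/-- The function `φ(x) = β₀ + ∑ β_j x_j + β' m(x)`. -/
noncomputable def phiF (n : ℕ) (c : ℕ → ℝ) (β₀ : ℝ) (β : Fin n → ℝ) (β' : ℝ)
    (x : Fin n → ℝ) : ℝ :=
  β₀ + ∑ j, β j * x j + β' * mPoly n c x

lemma phiF_nonneg (n : ℕ) (ℓ u : ℝ) (c : ℕ → ℝ) (β₀ : ℝ) (β : Fin n → ℝ) (β' : ℝ)
    (hvalid : IsValid n ℓ u c β₀ β β') (x : Fin n → ℝ) (hx : x ∈ Xbox n ℓ u) :
    0 ≤ phiF n c β₀ β β' x := by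
  have hmem : ((x, mPoly n c x) : (Fin n → ℝ) × ℝ) ∈ Gset n ℓ u c := ⟨hx, rfl⟩
  exact hvalid _ (subset_convexHull ℝ _ hmem)

lemma lhs_eq_phiF (n : ℕ) (ℓ u : ℝ) (c : ℕ → ℝ) (β₀ : ℝ) (β : Fin n → ℝ) (β' : ℝ)
    (p : (Fin n → ℝ) × ℝ) (hp : p ∈ Gset n ℓ u c) :
    ineqLhs n β₀ β β' p = phiF n c β₀ β β' p.1 := by
  unfold ineqLhs phiF
  rw [hp.2]

lemma g_eq_phiF (n : ℕ) (ℓ u : ℝ) (c : ℕ → ℝ) (β₀ : ℝ) (β : Fin n → ℝ) (β' : ℝ) (k : ℕ) :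
    Lk n ℓ u β₀ β k + β' * mval n ℓ u c k = phiF n c β₀ β β' (xpt n ℓ u k) := by
  unfold Lk mval phiF
  have hsplit : ∑ j, β j * xpt n ℓ u k j
      = u * ∑ j ∈ Finset.univ.filter (fun j : Fin n => (j : ℕ) < k), β j
        + ℓ * ∑ j ∈ Finset.univ.filter (fun j : Fin n => k ≤ (j : ℕ)), β j := by
    rw [← Finset.sum_filter_add_sum_filter_not Finset.univ (fun j : Fin n => (j : ℕ) < k)]
    have e1 : ∑ j ∈ Finset.univ.filter (fun j : Fin n => (j : ℕ) < k),
        (fun j => β j * xpt n ℓ u k j) j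
        = ∑ j ∈ Finset.univ.filter (fun j : Fin n => (j : ℕ) < k), β j * u := by
      refine Finset.sum_congr rfl fun j hj => ?_
      have : (j : ℕ) < k := (Finset.mem_filter.1 hj).2
      simp [xpt, this]
    have e2 : Finset.univ.filter (fun j : Fin n => ¬ (j : ℕ) < k)
        = Finset.univ.filter (fun j : Fin n => k ≤ (j : ℕ)) := by
      refine Finset.filter_congr fun j _ => ?_
      simp only [not_lt]
    have e3 : ∑ j ∈ Finset.univ.filter (fun j : Fin n => ¬ (j : ℕ) < k),
        (fun j => β j * xpt n ℓ u k j) j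
        = ∑ j ∈ Finset.univ.filter (fun j : Fin n => k ≤ (j : ℕ)), β j * ℓ := by
      rw [e2]
      refine Finset.sum_congr rfl fun j hj => ?_
      have : ¬ (j : ℕ) < k := by
        have := (Finset.mem_filter.1 hj).2
        omega
      simp [xpt, this]
    rw [e1, e3, Finset.mul_sum, Finset.mul_sum]
    congr 1
    · exact Finset.sum_congr rfl fun _ _ => mul_comm _ _
    · exact Finset.sum_congr rfl fun _ _ => mul_comm _ _
  rw [hsplit]
  ring

lemma xpt_indicator (n : ℕ) (ℓ u : ℝ) (k : ℕ) :
    xpt n ℓ u k = fun i => if i ∈ Fk n k then u else ℓ := by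
  funext i
  simp [xpt, Fk]

lemma xpt_mem_Xbox (n : ℕ) (ℓ u : ℝ) (hlu : ℓ ≤ u) (k : ℕ) :
    xpt n ℓ u k ∈ Xbox n ℓ u := by
  intro j
  unfold xpt
  by_cases h : (j : ℕ) < k
  · simp [h, Set.mem_Icc, hlu]
  · simp [h, Set.mem_Icc, hlu]

lemma indicator_mem_Xbox (n : ℕ) (ℓ u : ℝ) (hlu : ℓ ≤ u) (T : Finset (Fin n)) :
    (fun i => if i ∈ T then u else ℓ) ∈ Xbox n ℓ u := by
  intro j
  by_cases h : j ∈ T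
  · simp [h, Set.mem_Icc, hlu]
  · simp [h, Set.mem_Icc, hlu]

lemma phiF_vertex (n : ℕ) (ℓ u : ℝ) (c : ℕ → ℝ) (β₀ : ℝ) (β : Fin n → ℝ) (β' : ℝ)
    (T : Finset (Fin n)) (hT : T.card ≤ n) :
    phiF n c β₀ β β' (fun i => if i ∈ T then u else ℓ)
      = phiF n c β₀ β β' (xpt n ℓ u T.card)
        + (u - ℓ) * (∑ j ∈ T, β j - ∑ j ∈ Fk n T.card, β j) := by
  have hm : mPoly n c (fun i => if i ∈ T then u else ℓ)
      = mPoly n c (fun i => if i ∈ Fk n T.card then u else ℓ) :=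
    mPoly_indicator n c ℓ u T (Fk n T.card) (by rw [card_Fk n T.card hT])
  unfold phiF
  rw [xpt_indicator n ℓ u T.card, hm,
    sum_indicator n T β ℓ u, sum_indicator n (Fk n T.card) β ℓ u]
  ring

lemma phiF_update_affine (n : ℕ) (c : ℕ → ℝ) (β₀ : ℝ) (β : Fin n → ℝ) (β' : ℝ)
    (x : Fin n → ℝ) (j : Fin n) (a b s t : ℝ) (hab : a + b = 1) :
    phiF n c β₀ β β' (Function.update x j (a * s + b * t))
      = a * phiF n c β₀ β β' (Function.update x j s)
        + b * phiF n c β₀ β β' (Function.update x j t) := by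
  unfold phiF
  rw [mPoly_update_affine n c x j a b s t hab, sum_update, sum_update, sum_update]
  linear_combination (-(β₀ + ∑ i ∈ Finset.univ.erase j, β i * x i)) * hab

lemma push_down_single (n : ℕ) (ℓ u : ℝ) (hlu : ℓ < u) (c : ℕ → ℝ) (β₀ : ℝ)
    (β : Fin n → ℝ) (β' : ℝ) (hvalid : IsValid n ℓ u c β₀ β β')
    (x : Fin n → ℝ) (hx : x ∈ Xbox n ℓ u) (h0 : phiF n c β₀ β β' x = 0)
    (j : Fin n) (hj : x j ≠ u) :
    Function.update x j ℓ ∈ Xbox n ℓ u ∧ phiF n c β₀ β β' (Function.update x j ℓ) = 0 := by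
  have hxj := hx j
  rw [Set.mem_Icc] at hxj
  have hd : (0:ℝ) < u - ℓ := sub_pos.2 hlu
  set a : ℝ := (u - x j) / (u - ℓ) with ha_def
  set b : ℝ := (x j - ℓ) / (u - ℓ) with hb_def
  have hab : a + b = 1 := by
    rw [ha_def, hb_def]
    field_simp
    ring
  have hxu : x j < u := lt_of_le_of_ne hxj.2 hj
  have ha : 0 < a := div_pos (by linarith) hd
  have hb : 0 ≤ b := div_nonneg (by linarith) hd.le
  have hval : a * ℓ + b * u = x j := by
    rw [ha_def, hb_def]
    field_simp
    ring
  have memℓ : Function.update x j ℓ ∈ Xbox n ℓ u := by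
    intro i
    by_cases hij : i = j
    · subst hij; simp [Set.mem_Icc, hlu.le]
    · rw [Function.update_of_ne hij]; exact hx i
  have memu : Function.update x j u ∈ Xbox n ℓ u := by
    intro i
    by_cases hij : i = j
    · subst hij; simp [Set.mem_Icc, hlu.le]
    · rw [Function.update_of_ne hij]; exact hx i
  have hA := phiF_nonneg n ℓ u c β₀ β β' hvalid _ memℓ
  have hB := phiF_nonneg n ℓ u c β₀ β β' hvalid _ memu
  have hsplit := phiF_update_affine n c β₀ β β' x j a b ℓ u hab
  rw [hval, Function.update_eq_self] at hsplit
  rw [h0] at hsplit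
  refine ⟨memℓ, ?_⟩
  nlinarith

lemma push_up_single (n : ℕ) (ℓ u : ℝ) (hlu : ℓ < u) (c : ℕ → ℝ) (β₀ : ℝ)
    (β : Fin n → ℝ) (β' : ℝ) (hvalid : IsValid n ℓ u c β₀ β β')
    (x : Fin n → ℝ) (hx : x ∈ Xbox n ℓ u) (h0 : phiF n c β₀ β β' x = 0)
    (j : Fin n) (hj : x j ≠ ℓ) :
    Function.update x j u ∈ Xbox n ℓ u ∧ phiF n c β₀ β β' (Function.update x j u) = 0 := by
  have hxj := hx j
  rw [Set.mem_Icc] at hxj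
  have hd : (0:ℝ) < u - ℓ := sub_pos.2 hlu
  set a : ℝ := (u - x j) / (u - ℓ) with ha_def
  set b : ℝ := (x j - ℓ) / (u - ℓ) with hb_def
  have hab : a + b = 1 := by
    rw [ha_def, hb_def]
    field_simp
    ring
  have hxl : ℓ < x j := lt_of_le_of_ne hxj.1 (Ne.symm hj)
  have ha : 0 ≤ a := div_nonneg (by linarith) hd.le
  have hb : 0 < b := div_pos (by linarith) hd
  have hval : a * ℓ + b * u = x j := by
    rw [ha_def, hb_def]
    field_simp
    ring
  have memℓ : Function.update x j ℓ ∈ Xbox n ℓ u := by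
    intro i
    by_cases hij : i = j
    · subst hij; simp [Set.mem_Icc, hlu.le]
    · rw [Function.update_of_ne hij]; exact hx i
  have memu : Function.update x j u ∈ Xbox n ℓ u := by
    intro i
    by_cases hij : i = j
    · subst hij; simp [Set.mem_Icc, hlu.le]
    · rw [Function.update_of_ne hij]; exact hx i
  have hA := phiF_nonneg n ℓ u c β₀ β β' hvalid _ memℓ
  have hB := phiF_nonneg n ℓ u c β₀ β β' hvalid _ memu
  have hsplit := phiF_update_affine n c β₀ β β' x j a b ℓ u hab
  rw [hval, Function.update_eq_self] at hsplit
  rw [h0] at hsplit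
  refine ⟨memu, ?_⟩
  nlinarith

lemma push_down_all (n : ℕ) (ℓ u : ℝ) (hlu : ℓ < u) (c : ℕ → ℝ) (β₀ : ℝ)
    (β : Fin n → ℝ) (β' : ℝ) (hvalid : IsValid n ℓ u c β₀ β β')
    (x : Fin n → ℝ) (hx : x ∈ Xbox n ℓ u) (h0 : phiF n c β₀ β β' x = 0) :
    phiF n c β₀ β β' (fun i => if x i = u then u else ℓ) = 0 := by
  classical
  have main : ∀ s : Finset (Fin n),
      (fun i => if i ∈ s then (if x i = u then u else ℓ) else x i) ∈ Xbox n ℓ u ∧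
      phiF n c β₀ β β' (fun i => if i ∈ s then (if x i = u then u else ℓ) else x i) = 0 := by
    intro s
    induction s using Finset.induction with
    | empty =>
      have : (fun i => if i ∈ (∅ : Finset (Fin n)) then (if x i = u then u else ℓ) else x i)
          = x := funext fun i => by simp
      rw [this]
      exact ⟨hx, h0⟩
    | @insert j s hj IH =>
      set y : Fin n → ℝ := fun i => if i ∈ s then (if x i = u then u else ℓ) else x i with hy
      have hupd : (fun i => if i ∈ insert j s then (if x i = u then u else ℓ) else x i)
          = Function.update y j (if x j = u then u else ℓ) := by
        funext i
        by_cases hij : i = j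
        · subst hij
          simp [Function.update_self, Finset.mem_insert]
        · rw [Function.update_of_ne hij]
          simp only [Finset.mem_insert, hij, false_or, hy]
      rw [hupd]
      by_cases hxj : x j = u
      · have hyj : (if x j = u then u else ℓ) = y j := by
          simp [hy, hj, hxj]
        rw [hyj, Function.update_eq_self]
        exact IH
      · have hyj : y j ≠ u := by
          simp [hy, hj, hxj]
        simp only [hxj, if_false]
        exact push_down_single n ℓ u hlu c β₀ β β' hvalid y IH.1 IH.2 j hyj
  have := (main Finset.univ).2
  have heq : (fun i => if i ∈ (Finset.univ : Finset (Fin n))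
      then (if x i = u then u else ℓ) else x i) = fun i => if x i = u then u else ℓ :=
    funext fun i => by simp
  rwa [heq] at this

lemma push_up_all (n : ℕ) (ℓ u : ℝ) (hlu : ℓ < u) (c : ℕ → ℝ) (β₀ : ℝ)
    (β : Fin n → ℝ) (β' : ℝ) (hvalid : IsValid n ℓ u c β₀ β β')
    (x : Fin n → ℝ) (hx : x ∈ Xbox n ℓ u) (h0 : phiF n c β₀ β β' x = 0) :
    phiF n c β₀ β β' (fun i => if x i = ℓ then ℓ else u) = 0 := by
  classical
  have main : ∀ s : Finset (Fin n),
      (fun i => if i ∈ s then (if x i = ℓ then ℓ else u) else x i) ∈ Xbox n ℓ u ∧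
      phiF n c β₀ β β' (fun i => if i ∈ s then (if x i = ℓ then ℓ else u) else x i) = 0 := by
    intro s
    induction s using Finset.induction with
    | empty =>
      have : (fun i => if i ∈ (∅ : Finset (Fin n)) then (if x i = ℓ then ℓ else u) else x i)
          = x := funext fun i => by simp
      rw [this]
      exact ⟨hx, h0⟩
    | @insert j s hj IH =>
      set y : Fin n → ℝ := fun i => if i ∈ s then (if x i = ℓ then ℓ else u) else x i with hy
      have hupd : (fun i => if i ∈ insert j s then (if x i = ℓ then ℓ else u) else x i)
          = Function.update y j (if x j = ℓ then ℓ else u) := by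
        funext i
        by_cases hij : i = j
        · subst hij
          simp [Function.update_self, Finset.mem_insert]
        · rw [Function.update_of_ne hij]
          simp only [Finset.mem_insert, hij, false_or, hy]
      rw [hupd]
      by_cases hxj : x j = ℓ
      · have hyj : (if x j = ℓ then ℓ else u) = y j := by
          simp [hy, hj, hxj]
        rw [hyj, Function.update_eq_self]
        exact IH
      · have hyj : y j ≠ ℓ := by
          simp [hy, hj, hxj]
        simp only [hxj, if_false]
        exact push_up_single n ℓ u hlu c β₀ β β' hvalid y IH.1 IH.2 j hyj
  have := (main Finset.univ).2
  have heq : (fun i => if i ∈ (Finset.univ : Finset (Fin n))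
      then (if x i = ℓ then ℓ else u) else x i) = fun i => if x i = ℓ then ℓ else u :=
    funext fun i => by simp
  rwa [heq] at this

lemma exact_down (n : ℕ) (ℓ u : ℝ) (hlu : ℓ < u) (c : ℕ → ℝ) (β₀ : ℝ)
    (β : Fin n → ℝ) (β' : ℝ) (hmono : Monotone β) (hvalid : IsValid n ℓ u c β₀ β β')
    (x : Fin n → ℝ) (hx : x ∈ Xbox n ℓ u) (h0 : phiF n c β₀ β β' x = 0) :
    phiF n c β₀ β β' (xpt n ℓ u (Finset.univ.filter (fun i => x i = u)).card) = 0 ∧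
    ∑ j ∈ Finset.univ.filter (fun i => x i = u), β j
      = ∑ j ∈ Fk n (Finset.univ.filter (fun i => x i = u)).card, β j := by
  classical
  set T : Finset (Fin n) := Finset.univ.filter (fun i => x i = u) with hT
  have hTcard : T.card ≤ n := by
    have := Finset.card_filter_le (Finset.univ : Finset (Fin n)) (fun i => x i = u)
    simpa using this
  have hind : (fun i => if x i = u then u else ℓ) = fun i => if i ∈ T then u else ℓ := by
    funext i
    by_cases h : x i = u <;> simp [hT, h]
  have hzero : phiF n c β₀ β β' (fun i => if i ∈ T then u else ℓ) = 0 := by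
    rw [← hind]
    exact push_down_all n ℓ u hlu c β₀ β β' hvalid x hx h0
  rw [phiF_vertex n ℓ u c β₀ β β' T hTcard] at hzero
  have h1 : 0 ≤ phiF n c β₀ β β' (xpt n ℓ u T.card) :=
    phiF_nonneg n ℓ u c β₀ β β' hvalid _ (xpt_mem_Xbox n ℓ u hlu.le _)
  have h2 : ∑ j ∈ Fk n T.card, β j ≤ ∑ j ∈ T, β j :=
    minsum n T.card β hmono T rfl hTcard
  have hd : (0:ℝ) < u - ℓ := sub_pos.2 hlu
  constructor
  · nlinarith
  · nlinarith

lemma exact_up (n : ℕ) (ℓ u : ℝ) (hlu : ℓ < u) (c : ℕ → ℝ) (β₀ : ℝ)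
    (β : Fin n → ℝ) (β' : ℝ) (hmono : Monotone β) (hvalid : IsValid n ℓ u c β₀ β β')
    (x : Fin n → ℝ) (hx : x ∈ Xbox n ℓ u) (h0 : phiF n c β₀ β β' x = 0) :
    phiF n c β₀ β β' (xpt n ℓ u (Finset.univ.filter (fun i => x i ≠ ℓ)).card) = 0 ∧
    ∑ j ∈ Finset.univ.filter (fun i => x i ≠ ℓ), β j
      = ∑ j ∈ Fk n (Finset.univ.filter (fun i => x i ≠ ℓ)).card, β j := by
  classical
  set S : Finset (Fin n) := Finset.univ.filter (fun i => x i ≠ ℓ) with hS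
  have hScard : S.card ≤ n := by
    have := Finset.card_filter_le (Finset.univ : Finset (Fin n)) (fun i => x i ≠ ℓ)
    simpa using this
  have hind : (fun i => if x i = ℓ then ℓ else u) = fun i => if i ∈ S then u else ℓ := by
    funext i
    by_cases h : x i = ℓ <;> simp [hS, h]
  have hzero : phiF n c β₀ β β' (fun i => if i ∈ S then u else ℓ) = 0 := by
    rw [← hind]
    exact push_up_all n ℓ u hlu c β₀ β β' hvalid x hx h0
  rw [phiF_vertex n ℓ u c β₀ β β' S hScard] at hzero
  have h1 : 0 ≤ phiF n c β₀ β β' (xpt n ℓ u S.card) :=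
    phiF_nonneg n ℓ u c β₀ β β' hvalid _ (xpt_mem_Xbox n ℓ u hlu.le _)
  have h2 : ∑ j ∈ Fk n S.card, β j ≤ ∑ j ∈ S, β j :=
    minsum n S.card β hmono S rfl hScard
  have hd : (0:ℝ) < u - ℓ := sub_pos.2 hlu
  constructor
  · nlinarith
  · nlinarith

lemma lhs_affine (n : ℕ) (β₀ : ℝ) (β : Fin n → ℝ) (β' : ℝ)
    (p q : (Fin n → ℝ) × ℝ) (a b : ℝ) (hab : a + b = 1) :
    ineqLhs n β₀ β β' (a • p + b • q) = a * ineqLhs n β₀ β β' p + b * ineqLhs n β₀ β β' q := by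
  unfold ineqLhs
  have h1 : ∑ j, β j * (a • p + b • q).1 j
      = a * ∑ j, β j * p.1 j + b * ∑ j, β j * q.1 j := by
    rw [Finset.mul_sum, Finset.mul_sum, ← Finset.sum_add_distrib]
    refine Finset.sum_congr rfl fun j _ => ?_
    simp only [Prod.fst_add, Prod.smul_fst, Pi.add_apply, Pi.smul_apply, smul_eq_mul]
    ring
  have h2 : (a • p + b • q).2 = a * p.2 + b * q.2 := by
    simp [smul_eq_mul]
  rw [h1, h2]
  linear_combination (-β₀) * hab

lemma conv_face (n : ℕ) (ℓ u : ℝ) (c : ℕ → ℝ) (β₀ : ℝ) (β : Fin n → ℝ) (β' : ℝ)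
    (hvalid : IsValid n ℓ u c β₀ β β')
    (e : ((Fin n → ℝ) × ℝ) → ℝ)
    (he : ∀ (p q : (Fin n → ℝ) × ℝ) (a b : ℝ), 0 ≤ a → 0 ≤ b → a + b = 1 →
      e (a • p + b • q) = a * e p + b * e q)
    (hG : ∀ p ∈ Gset n ℓ u c, ineqLhs n β₀ β β' p = 0 → e p = 0) :
    ∀ p ∈ convexHull ℝ (Gset n ℓ u c), ineqLhs n β₀ β β' p = 0 → e p = 0 := by
  set C : Set ((Fin n → ℝ) × ℝ) :=
    {p | 0 ≤ ineqLhs n β₀ β β' p ∧ (ineqLhs n β₀ β β' p = 0 → e p = 0)} with hC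
  have hconv : Convex ℝ C := by
    intro p hp q hq a b ha hb hab
    have hl := lhs_affine n β₀ β β' p q a b hab
    constructor
    · rw [hl]; nlinarith [hp.1, hq.1]
    · intro h0
      rw [hl] at h0
      have h1 : a * ineqLhs n β₀ β β' p = 0 := by nlinarith [hp.1, hq.1]
      have h2 : b * ineqLhs n β₀ β β' q = 0 := by nlinarith [hp.1, hq.1]
      rw [he p q a b ha hb hab]
      have e1 : a * e p = 0 := by
        rcases mul_eq_zero.1 h1 with h | h
        · rw [h]; ring
        · rw [hp.2 h]; ring
      have e2 : b * e q = 0 := by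
        rcases mul_eq_zero.1 h2 with h | h
        · rw [h]; ring
        · rw [hq.2 h]; ring
      linarith
  have hGC : Gset n ℓ u c ⊆ C := by
    intro p hp
    exact ⟨hvalid p (subset_convexHull ℝ _ hp), hG p hp⟩
  intro p hp h0
  exact ((convexHull_min hGC hconv) hp).2 h0

lemma kernel_contra (n : ℕ) (hn : 2 ≤ n) (β₀ : ℝ) (β : Fin n → ℝ) (β' : ℝ) (hβ' : β' ≠ 0)
    (j0 : Fin n) (v : ℝ) (pts : Fin (n + 1) → (Fin n → ℝ) × ℝ)
    (hind : AffineIndependent ℝ pts)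
    (h1 : ∀ i, (pts i).1 j0 = v)
    (h2 : ∀ i, ineqLhs n β₀ β β' (pts i) = 0) : False := by
  classical
  set Φ : ((Fin n → ℝ) × ℝ) →ₗ[ℝ] ℝ × ℝ :=
    { toFun := fun p => (p.1 j0, ∑ j, β j * p.1 j + β' * p.2)
      map_add' := by
        intro p q
        refine Prod.ext (by simp) ?_
        simp only [Prod.fst_add, Pi.add_apply, Prod.snd_add]
        rw [show (∑ x, β x * (p.1 x + q.1 x)) = ∑ x, (β x * p.1 x + β x * q.1 x) from
          Finset.sum_congr rfl fun j _ => by ring, Finset.sum_add_distrib]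
        ring
      map_smul' := by
        intro m p
        refine Prod.ext (by simp) ?_
        simp only [Prod.smul_fst, Pi.smul_apply, smul_eq_mul, Prod.smul_snd, RingHom.id_apply]
        rw [show (∑ x, β x * (m * p.1 x)) = ∑ x, m * (β x * p.1 x) from
          Finset.sum_congr rfl fun j _ => by ring, ← Finset.mul_sum]
        ring } with hΦ
  have hsurj : Function.Surjective Φ := by
    rintro ⟨a, b⟩
    refine ⟨(fun i => if i = j0 then a else 0, (b - β j0 * a) / β'), ?_⟩
    have hs : ∑ j, β j * (if j = j0 then a else 0) = β j0 * a := by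
      rw [Finset.sum_eq_single j0]
      · simp
      · intro j _ hj; simp [hj]
      · intro h; exact absurd (Finset.mem_univ j0) h
    refine Prod.ext ?_ ?_ <;> simp only [hΦ, LinearMap.coe_mk, AddHom.coe_mk]
    · simp
    · rw [hs]
      field_simp
      ring
  have hker : vectorSpan ℝ (Set.range pts) ≤ LinearMap.ker Φ := by
    rw [vectorSpan_def]
    rw [Submodule.span_le]
    rintro z ⟨p, ⟨i, rfl⟩, q, ⟨i', rfl⟩, rfl⟩
    have hval : ∀ i, Φ (pts i) = (v, -β₀) := by
      intro i
      have := h2 i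
      unfold ineqLhs at this
      refine Prod.ext (h1 i) ?_
      show (∑ j, β j * (pts i).1 j + β' * (pts i).2) = -β₀
      linarith
    simp only [SetLike.mem_coe, LinearMap.mem_ker, vsub_eq_sub, map_sub, hval, sub_self]
  have hrank : Module.finrank ℝ (vectorSpan ℝ (Set.range pts)) = n :=
    hind.finrank_vectorSpan (by simp)
  have hdim : Module.finrank ℝ ((Fin n → ℝ) × ℝ) = n + 1 := by
    simp [Module.finrank_prod]
  have hdim2 : Module.finrank ℝ (ℝ × ℝ) = 2 := by
    simp [Module.finrank_prod]
  have hrange : Module.finrank ℝ (LinearMap.range Φ) = 2 := by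
    rw [LinearMap.range_eq_top.2 hsurj]
    rw [finrank_top]
    exact hdim2
  have hkerdim : Module.finrank ℝ (LinearMap.ker Φ) = n - 1 := by
    have := LinearMap.finrank_range_add_finrank_ker Φ
    rw [hrange, hdim] at this
    omega
  have := Submodule.finrank_mono hker
  rw [hrank, hkerdim] at this
  omega

end Aux
/-- For a core facet, the sets
`{k ∈ {0,…,n-1} : L_k(β₀,β) + β′ m(x^k) = 0}` and `{k ∈ {1,…,n} : L_k(β₀,β) + β′ m(x^k) = 0}`
are nonempty; with `r` the minimum of the first and `s` the maximum of the second,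
`β₁ = … = β_{r+1}` and `β_s = … = β_n` (paper indexing `1,…,n`). -/
theorem stmt9 (n : ℕ) (hn : 2 ≤ n) (ℓ u : ℝ) (hlu : ℓ < u) (c : ℕ → ℝ)
    (β₀ : ℝ) (β : Fin n → ℝ) (β' : ℝ)
    (hcore : IsCore n β β') (hvalid : IsValid n ℓ u c β₀ β β')
    (hfacet : IsFacet n ℓ u c β₀ β β') :
    {k : ℕ | k ≤ n - 1 ∧ Lk n ℓ u β₀ β k + β' * mval n ℓ u c k = 0}.Nonempty ∧
    {k : ℕ | 1 ≤ k ∧ k ≤ n ∧ Lk n ℓ u β₀ β k + β' * mval n ℓ u c k = 0}.Nonempty ∧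
    ∀ r s : ℕ,
      IsLeast {k : ℕ | k ≤ n - 1 ∧ Lk n ℓ u β₀ β k + β' * mval n ℓ u c k = 0} r →
      IsGreatest {k : ℕ | 1 ≤ k ∧ k ≤ n ∧ Lk n ℓ u β₀ β k + β' * mval n ℓ u c k = 0} s →
      (∀ i j : Fin n, (i : ℕ) ≤ r → (j : ℕ) ≤ r → β i = β j) ∧
      (∀ i j : Fin n, s ≤ (i : ℕ) + 1 → s ≤ (j : ℕ) + 1 → β i = β j) := by
  classical
  obtain ⟨hβ'or, hmono⟩ := hcore
  have hβ' : β' ≠ 0 := by rcases hβ'or with h | h <;> rw [h] <;> norm_num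
  obtain ⟨pts, hind, hpts⟩ := hfacet
  have hg : ∀ k, Lk n ℓ u β₀ β k + β' * mval n ℓ u c k
      = phiF n c β₀ β β' (xpt n ℓ u k) := fun k => g_eq_phiF n ℓ u c β₀ β β' k
  have hGexact : ∀ p ∈ Gset n ℓ u c, ineqLhs n β₀ β β' p = 0 →
      (p.1 ∈ Xbox n ℓ u ∧ phiF n c β₀ β β' p.1 = 0) := by
    intro p hp h0
    exact ⟨hp.1, by rw [← lhs_eq_phiF n ℓ u c β₀ β β' p hp]; exact h0⟩
  have hcoord_aff : ∀ (j0 : Fin n) (v : ℝ) (p q : (Fin n → ℝ) × ℝ) (a b : ℝ),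
      a + b = 1 →
      ((a • p + b • q).1 j0 - v) = a * (p.1 j0 - v) + b * (q.1 j0 - v) := by
    intro j0 v p q a b hab
    simp only [Prod.fst_add, Prod.smul_fst, Pi.add_apply, Pi.smul_apply, smul_eq_mul]
    linear_combination v * hab
  have h01 : (⟨0, by omega⟩ : Fin (n+1)) ≠ ⟨1, by omega⟩ :=
    fun h => Nat.zero_ne_one (congrArg Fin.val h)
  -- ### Part 1
  have part1 : {k : ℕ | k ≤ n - 1 ∧ Lk n ℓ u β₀ β k + β' * mval n ℓ u c k = 0}.Nonempty := by
    by_contra hemp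
    have hnone : ∀ k, k ≤ n - 1 → phiF n c β₀ β β' (xpt n ℓ u k) ≠ 0 := by
      intro k hk h0
      exact hemp ⟨k, hk, by rw [hg k]; exact h0⟩
    have hstruct : ∀ p ∈ Gset n ℓ u c, ineqLhs n β₀ β β' p = 0 →
        ∀ j : Fin n, p.1 j - u = 0 := by
      intro p hp h0 j
      obtain ⟨hpx, hp0⟩ := hGexact p hp h0
      obtain ⟨hz, -⟩ := exact_down n ℓ u hlu c β₀ β β' hmono hvalid p.1 hpx hp0
      set T : Finset (Fin n) := Finset.univ.filter (fun i => p.1 i = u) with hTdef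
      have hTn : T.card ≤ n := by
        simpa using Finset.card_filter_le (Finset.univ : Finset (Fin n)) (fun i => p.1 i = u)
      have hTcard : T.card = n := by
        by_contra hne
        exact hnone T.card (by omega) hz
      have hTuniv : T = Finset.univ := Finset.eq_univ_of_card T (by rw [hTcard]; simp)
      have hjT : j ∈ T := hTuniv ▸ Finset.mem_univ j
      have := (Finset.mem_filter.1 hjT).2
      rw [this]; ring
    have hall : ∀ i (j : Fin n), (pts i).1 j = u := by
      intro i j
      have := conv_face n ℓ u c β₀ β β' hvalid (fun p => p.1 j - u)
        (fun p q a b _ _ hab => hcoord_aff j u p q a b hab)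
        (fun p hp h0 => hstruct p hp h0 j) (pts i) (hpts i).1 (hpts i).2
      have h2 : (pts i).1 j - _ = 0 := this
      linarith
    have hy : ∀ i : Fin (n+1), (pts i).2 = (-(β₀ + ∑ j, β j * u)) / β' := by
      intro i
      have h0 := (hpts i).2
      unfold ExactAt ineqLhs at h0
      have hsum : ∑ j, β j * (pts i).1 j = ∑ j, β j * u :=
        Finset.sum_congr rfl fun j _ => by rw [hall i j]
      rw [hsum] at h0
      field_simp
      linarith
    have hpeq : pts ⟨0, by omega⟩ = pts ⟨1, by omega⟩ :=
      Prod.ext (funext fun j => by rw [hall _ j, hall _ j]) (by rw [hy, hy])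
    exact h01 (hind.injective hpeq)
  -- ### Part 2
  have part2 : {k : ℕ | 1 ≤ k ∧ k ≤ n ∧
      Lk n ℓ u β₀ β k + β' * mval n ℓ u c k = 0}.Nonempty := by
    by_contra hemp
    have hnone : ∀ k, 1 ≤ k → k ≤ n → phiF n c β₀ β β' (xpt n ℓ u k) ≠ 0 := by
      intro k hk1 hk2 h0
      exact hemp ⟨k, hk1, hk2, by rw [hg k]; exact h0⟩
    have hstruct : ∀ p ∈ Gset n ℓ u c, ineqLhs n β₀ β β' p = 0 →
        ∀ j : Fin n, p.1 j - ℓ = 0 := by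
      intro p hp h0 j
      obtain ⟨hpx, hp0⟩ := hGexact p hp h0
      obtain ⟨hz, -⟩ := exact_up n ℓ u hlu c β₀ β β' hmono hvalid p.1 hpx hp0
      set S : Finset (Fin n) := Finset.univ.filter (fun i => p.1 i ≠ ℓ) with hSdef
      have hSn : S.card ≤ n := by
        simpa using Finset.card_filter_le (Finset.univ : Finset (Fin n)) (fun i => p.1 i ≠ ℓ)
      have hScard : S.card = 0 := by
        by_contra hne
        exact hnone S.card (by omega) hSn hz
      have hSempty : S = ∅ := Finset.card_eq_zero.1 hScard
      have hjS : j ∉ S := by rw [hSempty]; exact Finset.notMem_empty j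
      have : ¬ p.1 j ≠ ℓ := fun hne => hjS (Finset.mem_filter.2 ⟨Finset.mem_univ j, hne⟩)
      rw [not_not.1 this]; ring
    have hall : ∀ i (j : Fin n), (pts i).1 j = ℓ := by
      intro i j
      have := conv_face n ℓ u c β₀ β β' hvalid (fun p => p.1 j - ℓ)
        (fun p q a b _ _ hab => hcoord_aff j ℓ p q a b hab)
        (fun p hp h0 => hstruct p hp h0 j) (pts i) (hpts i).1 (hpts i).2
      have h2 : (pts i).1 j - _ = 0 := this
      linarith
    have hy : ∀ i : Fin (n+1), (pts i).2 = (-(β₀ + ∑ j, β j * ℓ)) / β' := by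
      intro i
      have h0 := (hpts i).2
      unfold ExactAt ineqLhs at h0
      have hsum : ∑ j, β j * (pts i).1 j = ∑ j, β j * ℓ :=
        Finset.sum_congr rfl fun j _ => by rw [hall i j]
      rw [hsum] at h0
      field_simp
      linarith
    have hpeq : pts ⟨0, by omega⟩ = pts ⟨1, by omega⟩ :=
      Prod.ext (funext fun j => by rw [hall _ j, hall _ j]) (by rw [hy, hy])
    exact h01 (hind.injective hpeq)
  refine ⟨part1, part2, ?_⟩
  intro r s hr hs
  have hrn : r ≤ n - 1 := hr.1.1
  have hs1 : 1 ≤ s := hs.1.1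
  have hsn : s ≤ n := hs.1.2.1
  constructor
  -- ### Part 3a
  · have hconsec : ∀ (q : ℕ) (hq : q + 1 ≤ r), β ⟨q, by omega⟩ = β ⟨q + 1, by omega⟩ := by
      intro q hq
      by_contra hne
      have hlt : β ⟨q, by omega⟩ < β ⟨q + 1, by omega⟩ :=
        lt_of_le_of_ne (hmono (by simp [Fin.le_def])) hne
      have hstruct : ∀ p ∈ Gset n ℓ u c, ineqLhs n β₀ β β' p = 0 →
          p.1 ⟨0, by omega⟩ - u = 0 := by
        intro p hp h0
        obtain ⟨hpx, hp0⟩ := hGexact p hp h0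
        obtain ⟨hz, hsum⟩ := exact_down n ℓ u hlu c β₀ β β' hmono hvalid p.1 hpx hp0
        set T : Finset (Fin n) := Finset.univ.filter (fun i => p.1 i = u) with hTdef
        have hTn : T.card ≤ n := by
          simpa using Finset.card_filter_le (Finset.univ : Finset (Fin n)) (fun i => p.1 i = u)
        have hmemT : ∀ j : Fin n, (j : ℕ) ≤ q → j ∈ T := by
          intro j hjq
          by_contra hjT
          have hkn : T.card ≠ n := by
            intro h
            exact hjT ((Finset.eq_univ_of_card T (by rw [h]; simp)) ▸ Finset.mem_univ j)
          have hkset : T.card ∈ {k : ℕ | k ≤ n - 1 ∧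
              Lk n ℓ u β₀ β k + β' * mval n ℓ u c k = 0} :=
            ⟨by omega, by rw [hg]; exact hz⟩
          have hrk : r ≤ T.card := hr.2 hkset
          have hex : ∃ t ∈ T, q + 1 ≤ (t : ℕ) := by
            by_contra hno
            push_neg at hno
            have hjFk : j ∈ Fk n (q + 1) := by
              simp only [Fk, Finset.mem_filter, Finset.mem_univ, true_and]
              omega
            have hsub : T ⊆ (Fk n (q + 1)).erase j := by
              intro t ht
              refine Finset.mem_erase.2 ⟨?_, ?_⟩
              · rintro rfl; exact hjT ht
              · simp only [Fk, Finset.mem_filter, Finset.mem_univ, true_and]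
                have := hno t ht
                omega
            have hcard_le := Finset.card_le_card hsub
            rw [Finset.card_erase_of_mem hjFk, card_Fk n (q + 1) (by omega)] at hcard_le
            omega
          obtain ⟨t, htT, htq⟩ := hex
          have hβjt : β j < β t := by
            calc β j ≤ β ⟨q, by omega⟩ := hmono (by simp [Fin.le_def]; omega)
            _ < β ⟨q + 1, by omega⟩ := hlt
            _ ≤ β t := hmono (by simp [Fin.le_def]; omega)
          have hjT' : j ∉ T.erase t := fun h => hjT (Finset.mem_of_mem_erase h)
          have hk1 : 1 ≤ T.card := Finset.card_pos.2 ⟨t, htT⟩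
          have hcardT' : (insert j (T.erase t)).card = T.card := by
            rw [Finset.card_insert_of_notMem hjT', Finset.card_erase_of_mem htT]
            omega
          have hsum1 : ∑ i ∈ insert j (T.erase t), β i
              = β j + (∑ i ∈ T, β i - β t) := by
            rw [Finset.sum_insert hjT']
            have := Finset.add_sum_erase T β htT
            linarith
          have hmin := minsum n T.card β hmono (insert j (T.erase t)) hcardT' hTn
          linarith
        have h0T : (⟨0, by omega⟩ : Fin n) ∈ T := hmemT ⟨0, by omega⟩ (Nat.zero_le q)
        have := (Finset.mem_filter.1 h0T).2
        rw [this]; ring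
      have hall : ∀ i, (pts i).1 ⟨0, by omega⟩ = u := by
        intro i
        have := conv_face n ℓ u c β₀ β β' hvalid (fun p => p.1 ⟨0, by omega⟩ - u)
          (fun p q a b _ _ hab => hcoord_aff _ u p q a b hab)
          hstruct (pts i) (hpts i).1 (hpts i).2
        have h2 : (pts i).1 _ - _ = 0 := this
        linarith
      exact kernel_contra n hn β₀ β β' hβ' ⟨0, by omega⟩ u pts hind hall
        (fun i => (hpts i).2)
    have key : ∀ (m : ℕ) (hm : m ≤ r), β ⟨m, by omega⟩ = β ⟨0, by omega⟩ := by
      intro m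
      induction m with
      | zero => intro _; rfl
      | succ m IH =>
        intro hm
        rw [← hconsec m (by omega)]
        exact IH (by omega)
    intro i j hi hj
    have hi' : β i = β ⟨0, by omega⟩ := by
      rw [show i = (⟨(i : ℕ), by omega⟩ : Fin n) from Fin.ext rfl]
      exact key (i : ℕ) hi
    have hj' : β j = β ⟨0, by omega⟩ := by
      rw [show j = (⟨(j : ℕ), by omega⟩ : Fin n) from Fin.ext rfl]
      exact key (j : ℕ) hj
    rw [hi', hj']
  -- ### Part 3b
  · have hconsec : ∀ (q : ℕ) (hq1 : s ≤ q + 1) (hq2 : q + 1 ≤ n - 1),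
        β ⟨q, by omega⟩ = β ⟨q + 1, by omega⟩ := by
      intro q hq1 hq2
      by_contra hne
      have hlt : β ⟨q, by omega⟩ < β ⟨q + 1, by omega⟩ :=
        lt_of_le_of_ne (hmono (by simp [Fin.le_def])) hne
      have hstruct : ∀ p ∈ Gset n ℓ u c, ineqLhs n β₀ β β' p = 0 →
          p.1 ⟨n - 1, by omega⟩ - ℓ = 0 := by
        intro p hp h0
        obtain ⟨hpx, hp0⟩ := hGexact p hp h0
        obtain ⟨hz, hsum⟩ := exact_up n ℓ u hlu c β₀ β β' hmono hvalid p.1 hpx hp0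
        set S : Finset (Fin n) := Finset.univ.filter (fun i => p.1 i ≠ ℓ) with hSdef
        have hSn : S.card ≤ n := by
          simpa using Finset.card_filter_le (Finset.univ : Finset (Fin n)) (fun i => p.1 i ≠ ℓ)
        have hnotS : ∀ j : Fin n, q + 1 ≤ (j : ℕ) → j ∉ S := by
          intro j hjq hjS
          have hk1 : 1 ≤ S.card := Finset.card_pos.2 ⟨j, hjS⟩
          have hkset : S.card ∈ {k : ℕ | 1 ≤ k ∧ k ≤ n ∧
              Lk n ℓ u β₀ β k + β' * mval n ℓ u c k = 0} :=
            ⟨hk1, hSn, by rw [hg]; exact hz⟩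
          have hks : S.card ≤ s := hs.2 hkset
          have hjFk : j ∉ Fk n S.card := by
            simp only [Fk, Finset.mem_filter, Finset.mem_univ, true_and]
            omega
          have hex : ∃ i0 ∈ Fk n S.card, i0 ∉ S := by
            by_contra hno
            push_neg at hno
            have hsub : Fk n S.card ⊆ S := hno
            have heq : Fk n S.card = S :=
              Finset.eq_of_subset_of_card_le hsub (by rw [card_Fk n S.card hSn])
            exact hjFk (by rw [heq]; exact hjS)
          obtain ⟨i0, hi0Fk, hi0S⟩ := hex
          have hi0q : (i0 : ℕ) ≤ q := by
            have : (i0 : ℕ) < S.card := by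
              have := (Finset.mem_filter.1 hi0Fk).2
              exact this
            omega
          have hβi0j : β i0 < β j := by
            calc β i0 ≤ β ⟨q, by omega⟩ := hmono (by simp [Fin.le_def]; omega)
            _ < β ⟨q + 1, by omega⟩ := hlt
            _ ≤ β j := hmono (by simp [Fin.le_def]; omega)
          have hi0S' : i0 ∉ S.erase j := fun h => hi0S (Finset.mem_of_mem_erase h)
          have hcardS' : (insert i0 (S.erase j)).card = S.card := by
            rw [Finset.card_insert_of_notMem hi0S', Finset.card_erase_of_mem hjS]
            omega
          have hsum1 : ∑ i ∈ insert i0 (S.erase j), β i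
              = β i0 + (∑ i ∈ S, β i - β j) := by
            rw [Finset.sum_insert hi0S']
            have := Finset.add_sum_erase S β hjS
            linarith
          have hmin := minsum n S.card β hmono (insert i0 (S.erase j)) hcardS' hSn
          linarith
        have hnot := hnotS ⟨n - 1, by omega⟩ (by show q + 1 ≤ n - 1; omega)
        have : ¬ p.1 ⟨n - 1, by omega⟩ ≠ ℓ :=
          fun hne' => hnot (Finset.mem_filter.2 ⟨Finset.mem_univ _, hne'⟩)
        rw [not_not.1 this]; ring
      have hall : ∀ i, (pts i).1 ⟨n - 1, by omega⟩ = ℓ := by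
        intro i
        have := conv_face n ℓ u c β₀ β β' hvalid (fun p => p.1 ⟨n - 1, by omega⟩ - ℓ)
          (fun p q a b _ _ hab => hcoord_aff _ ℓ p q a b hab)
          hstruct (pts i) (hpts i).1 (hpts i).2
        have h2 : (pts i).1 _ - _ = 0 := this
        linarith
      exact kernel_contra n hn β₀ β β' hβ' ⟨n - 1, by omega⟩ ℓ pts hind hall
        (fun i => (hpts i).2)
    have key : ∀ (d m : ℕ) (hm : m = n - 1 - d) (hsm : s ≤ m + 1),
        β ⟨m, by omega⟩ = β ⟨n - 1, by omega⟩ := by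
      intro d
      induction d with
      | zero =>
        intro m hm _
        have : (⟨m, by omega⟩ : Fin n) = ⟨n - 1, by omega⟩ := Fin.ext (show m = n - 1 by omega)
        rw [this]
      | succ d IH =>
        intro m hm hsm
        by_cases hcase : m = n - 1 - d
        · exact IH m hcase hsm
        · have hm1 : m + 1 = n - 1 - d := by omega
          rw [hconsec m hsm (by omega)]
          exact IH (m + 1) hm1 (by omega)
    intro i j hi hj
    have hiLt := i.isLt
    have hjLt := j.isLt
    have hi' : β i = β ⟨n - 1, by omega⟩ := by
      rw [show i = (⟨(i : ℕ), by omega⟩ : Fin n) from Fin.ext rfl]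
      exact key (n - 1 - (i : ℕ)) (i : ℕ) (by omega) hi
    have hj' : β j = β ⟨n - 1, by omega⟩ := by
      rw [show j = (⟨(j : ℕ), by omega⟩ : Fin n) from Fin.ext rfl]
      exact key (n - 1 - (j : ℕ)) (j : ℕ) (by omega) hj
    rw [hi', hj']
end
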